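/- arXiv:1812.09255 — 8 statements merged into one kernel-verified Lean document; each statement's English description precedes it below -/
import Mathlib

section
/- (Key Lemma) Let r_0 be an index such that E_Stop(r) > Ē_Keep(r) for every r with r_0 < r ≤ n. Then E_Stop(r) > E_Keep(r) for every r with r_0 < r ≤ n. -/
open Finset

theorem stmt3 (n : ℕ) (hn : 1 ≤ n) (p w : ℕ → ℝ)
    (hp : ∀ i ∈ Icc 1 n, 0 ≤ p i ∧ p i ≤ 1)
    (hw : ∀ i ∈ Icc 1 n, 0 < w i)
    (ES EK EB : ℕ → ℝ)
    (hES : ∀ k, ES k = w k * ∏ i ∈ Icc (k+1) n, (1 - p i))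
    (hEKn : EK n = 0)
    (hEK : ∀ k < n, EK k = p (k+1) * max (ES (k+1)) (EK (k+1))
        + (1 - p (k+1)) * EK (k+1))
    (hEB : ∀ k, EB k = ∑ i ∈ Icc (k+1) n,
        (∏ j ∈ Icc (k+1) (i-1), (1 - p j)) * p i * ES i)
    (r0 : ℕ)
    (hr0 : ∀ r, r0 < r → r ≤ n → ES r > EB r) :
    ∀ r, r0 < r → r ≤ n → ES r > EK r := by
  have hEBrec : ∀ k < n, EB k = p (k+1) * ES (k+1) + (1 - p (k+1)) * EB (k+1) := by
    intro k hk
    rw [hEB k, hEB (k+1)]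
    have h1 : k + 1 ∈ Icc (k+1) n := by simp; omega
    rw [← Finset.add_sum_erase _ _ h1]
    have herase : (Icc (k+1) n).erase (k+1) = Icc (k+2) n := by
      ext x; simp only [Finset.mem_erase, Finset.mem_Icc]; omega
    rw [herase]
    have hfirst : (∏ j ∈ Icc (k+1) (k+1-1), (1 - p j)) = 1 := by
      have : Icc (k+1) (k+1-1) = ∅ := Finset.Icc_eq_empty (by omega)
      rw [this, Finset.prod_empty]
    congr 1
    · rw [hfirst, one_mul]
    · rw [Finset.mul_sum]
      apply Finset.sum_congr rfl
      intro i hi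
      simp only [Finset.mem_Icc] at hi
      have hinsert : Icc (k+1) (i-1) = insert (k+1) (Icc (k+2) (i-1)) := by
        ext x; simp only [Finset.mem_insert, Finset.mem_Icc]; omega
      rw [hinsert, Finset.prod_insert (by simp)]
      ring
  have key : ∀ m, ∀ r, r0 < r → r ≤ n → n - r = m → ES r > EK r ∧ EK r = EB r := by
    intro m
    induction m with
    | zero =>
      intro r h1 h2 h3
      have hrn : r = n := by omega
      subst hrn
      have hEBn : EB r = 0 := by
        rw [hEB]
        have : Icc (r+1) r = ∅ := Finset.Icc_eq_empty (by omega)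
        rw [this, Finset.sum_empty]
      have := hr0 r h1 le_rfl
      rw [hEBn] at this
      exact ⟨by rw [hEKn]; exact this, by rw [hEKn, hEBn]⟩
    | succ m ih =>
      intro r h1 h2 h3
      have hrn : r < n := by omega
      obtain ⟨ih1, ih2⟩ := ih (r+1) (by omega) (by omega) (by omega)
      have hmax : max (ES (r+1)) (EK (r+1)) = ES (r+1) := max_eq_left ih1.le
      have hEKr : EK r = EB r := by
        rw [hEK r hrn, hmax, ih2, hEBrec r hrn]
      exact ⟨hEKr ▸ hr0 r h1 h2, hEKr⟩
  intro r h1 h2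
  exact (key (n - r) r h1 h2 rfl).1
end

section
/- If w_{k+1} ≥ (1 - p_{k+1}) · w_k for all 1 ≤ k ≤ n-1, then the stopping set Υ := {k ∈ {1,...,n} : E_Stop(k) > E_Keep(k)} is upward closed: if k ∈ Υ and k < n then k+1 ∈ Υ. (Hence the problem is monotone, i.e., the optimal strategy is a threshold strategy.) -/
open Finset

theorem stmt4 (n : ℕ) (hn : 1 ≤ n) (p w : ℕ → ℝ)
    (hp : ∀ i ∈ Icc 1 n, 0 ≤ p i ∧ p i ≤ 1)
    (hw : ∀ i ∈ Icc 1 n, 0 < w i)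
    (ES EK : ℕ → ℝ)
    (hES : ∀ k, ES k = w k * ∏ i ∈ Icc (k+1) n, (1 - p i))
    (hEKn : EK n = 0)
    (hEK : ∀ k < n, EK k = p (k+1) * max (ES (k+1)) (EK (k+1))
        + (1 - p (k+1)) * EK (k+1))
    (hmono : ∀ k, 1 ≤ k → k + 1 ≤ n → w (k+1) ≥ (1 - p (k+1)) * w k) :
    ∀ k ∈ Icc 1 n, ES k > EK k → k < n → ES (k+1) > EK (k+1) := by
  intro k hk hgt hkn
  by_contra h
  push_neg at h
  obtain ⟨hk1, hkn'⟩ := mem_Icc.mp hk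
  have hEKk : EK k = EK (k+1) := by
    rw [hEK k hkn, max_eq_right h]; ring
  have hprod0 : (0:ℝ) ≤ ∏ i ∈ Icc (k+2) n, (1 - p i) := by
    apply Finset.prod_nonneg
    intro i hi
    obtain ⟨h1, h2⟩ := mem_Icc.mp hi
    linarith [(hp i (mem_Icc.mpr ⟨by omega, h2⟩)).2]
  have hins : Icc (k+1) n = insert (k+1) (Icc (k+2) n) := by
    ext x; simp [mem_Icc]; omega
  have hESk : ES k = ((1 - p (k+1)) * w k) * ∏ i ∈ Icc (k+2) n, (1 - p i) := by
    rw [hES k, hins, Finset.prod_insert (by simp [mem_Icc])]; ring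
  have hES1 : ES (k+1) = w (k+1) * ∏ i ∈ Icc (k+2) n, (1 - p i) := by
    rw [hES (k+1)]
  have hm := hmono k hk1 (by omega)
  have : ES k ≤ ES (k+1) := by
    rw [hESk, hES1]
    exact mul_le_mul_of_nonneg_right hm hprod0
  linarith
end

section
/- Suppose that for all 0 < r < n the implication E_Stop(r) > Ē_Keep(r) ⟹ E_Stop(r+1) > Ē_Keep(r+1) holds. Then the stopping set Υ := {k : E_Stop(k) > E_Keep(k)} is upward closed in {1,...,n}, i.e., the problem is monotone. -/
open Finset

theorem stmt5 (n : ℕ) (hn : 1 ≤ n) (p w : ℕ → ℝ)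
    (hp : ∀ i ∈ Icc 1 n, 0 ≤ p i ∧ p i ≤ 1)
    (hw : ∀ i ∈ Icc 1 n, 0 < w i)
    (ES EK EB : ℕ → ℝ)
    (hES : ∀ k, ES k = w k * ∏ i ∈ Icc (k+1) n, (1 - p i))
    (hEKn : EK n = 0)
    (hEK : ∀ k < n, EK k = p (k+1) * max (ES (k+1)) (EK (k+1))
        + (1 - p (k+1)) * EK (k+1))
    (hEB : ∀ k, EB k = ∑ i ∈ Icc (k+1) n,
        (∏ j ∈ Icc (k+1) (i-1), (1 - p j)) * p i * ES i)
    (hyp : ∀ r, 0 < r → r < n → (ES r > EB r → ES (r+1) > EB (r+1))) :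
    ∀ k ∈ Icc 1 n, ES k > EK k → k < n → ES (k+1) > EK (k+1) := by
  have hEBn : EB n = 0 := by rw [hEB]; simp
  -- recursion for EB
  have hEBrec : ∀ k < n, EB k = p (k+1) * ES (k+1) + (1 - p (k+1)) * EB (k+1) := by
    intro k hk
    rw [hEB, hEB]
    have hins : Icc (k+1) n = insert (k+1) (Icc (k+2) n) := by
      ext x; simp; omega
    rw [hins, Finset.sum_insert (by simp)]
    have h1 : (∏ j ∈ Icc (k+1) (k+1-1), (1 - p j)) = 1 := by
      have : Icc (k+1) (k+1-1) = ∅ := by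
        apply Finset.Icc_eq_empty; omega
      rw [this, Finset.prod_empty]
    have hsum : ∑ i ∈ Icc (k+2) n, (∏ j ∈ Icc (k+1) (i-1), (1 - p j)) * p i * ES i
        = ∑ i ∈ Icc (k+2) n, (1 - p (k+1)) * ((∏ j ∈ Icc (k+2) (i-1), (1 - p j)) * p i * ES i) := by
      apply Finset.sum_congr rfl
      intro i hi
      simp only [Finset.mem_Icc] at hi
      have hins2 : Icc (k+1) (i-1) = insert (k+1) (Icc (k+2) (i-1)) := by
        ext x; simp; omega
      rw [hins2, Finset.prod_insert (by simp)]
      ring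
    rw [h1, hsum, ← Finset.mul_sum]
    ring
  -- EK ≥ EB
  have hKB : ∀ d k, k + d = n → EK k ≥ EB k := by
    intro d
    induction d with
    | zero => intro k hk; simp at hk; subst hk; rw [hEKn, hEBn]
    | succ d ih =>
      intro k hk
      have hkn : k < n := by omega
      have hk1 : k + 1 + d = n := by omega
      have hih := ih (k+1) hk1
      have hpk := hp (k+1) (by simp; omega)
      rw [hEK k hkn, hEBrec k hkn]
      have hmax : max (ES (k+1)) (EK (k+1)) ≥ ES (k+1) := le_max_left _ _
      nlinarith [hpk.1, hpk.2]
  -- propagation of ES > EB upward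
  have hprop : ∀ k, 0 < k → k ≤ n → ES k > EB k →
      ∀ r, k ≤ r → r ≤ n → ES r > EB r := by
    intro k hk0 hkn hkb r hkr
    induction r, hkr using Nat.le_induction with
    | base => intro _; exact hkb
    | succ r hr ih =>
      intro hrn
      exact hyp r (by omega) (by omega) (ih (by omega))
  -- EK = EB when stopping optimal onward
  have hKE : ∀ d k, k + d = n → (∀ r, k ≤ r → r ≤ n → ES r > EB r) → EK k = EB k := by
    intro d
    induction d with
    | zero => intro k hk _; simp at hk; subst hk; rw [hEKn, hEBn]
    | succ d ih =>
      intro k hk hall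
      have hkn : k < n := by omega
      have hih := ih (k+1) (by omega) (fun r hr hrn => hall r (by omega) hrn)
      have hgt : ES (k+1) > EB (k+1) := hall (k+1) (by omega) (by omega)
      rw [hEK k hkn, hEBrec k hkn, hih, max_eq_left (by linarith)]
  -- final assembly
  intro k hk hSK hkn
  simp only [Finset.mem_Icc] at hk
  have hSB : ES k > EB k := lt_of_le_of_lt (hKB (n - k) k (by omega)) hSK
  have hall : ∀ r, k + 1 ≤ r → r ≤ n → ES r > EB r :=
    hprop (k+1) (by omega) (by omega) (hyp k (by omega) hkn hSB)
  have := hKE (n - (k+1)) (k+1) (by omega) hall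
  rw [this]
  exact hall (k+1) le_rfl (by omega)
end

section
/- (Extended Odds-Theorem, threshold characterization) Suppose the problem is monotone, i.e., the set {k ∈ {1,...,n} : E_Stop(k) > E_Keep(k)} is nonempty and upward closed with minimum element k* (the optimal threshold), and suppose p_i < 1 for all k* ≤ i ≤ n. Setting w_0 := 0, one has k* = max{ k ∈ {1,...,n} : ∑_{j=k}^{n} w_j · p_j / (1 - p_j) ≥ w_{k-1} }. -/
open Finset

theorem stmt8 (n : ℕ) (hn : 1 ≤ n) (p w : ℕ → ℝ)
    (hp : ∀ i ∈ Icc 1 n, 0 ≤ p i ∧ p i ≤ 1)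
    (hw : ∀ i ∈ Icc 1 n, 0 < w i)
    (hw0 : w 0 = 0)
    (ES EK : ℕ → ℝ)
    (hES : ∀ k, ES k = w k * ∏ i ∈ Icc (k+1) n, (1 - p i))
    (hEKn : EK n = 0)
    (hEK : ∀ k < n, EK k = p (k+1) * max (ES (k+1)) (EK (k+1))
        + (1 - p (k+1)) * EK (k+1))
    (kstar : ℕ)
    (hleast : IsLeast {k | k ∈ Icc 1 n ∧ ES k > EK k} kstar)
    (hup : ∀ k ∈ Icc 1 n, ES k > EK k → k < n → ES (k+1) > EK (k+1))
    (hp' : ∀ i, kstar ≤ i → i ≤ n → p i < 1) :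
    IsGreatest {k | k ∈ Icc 1 n ∧ w (k-1) ≤ ∑ j ∈ Icc k n, w j * p j / (1 - p j)} kstar := by
  obtain ⟨⟨hks_mem, hks_gt⟩, hlb⟩ := hleast
  obtain ⟨hks1, hksn⟩ := mem_Icc.mp hks_mem
  -- monotonicity: ES k > EK k for all k in [kstar, n]
  have hC : ∀ k, kstar ≤ k → k ≤ n → ES k > EK k := by
    intro k hk
    induction k, hk using Nat.le_induction with
    | base => intro _; exact hks_gt
    | succ k hk ih =>
      intro hkn
      have hk' : k < n := by omega
      exact hup k (mem_Icc.mpr ⟨le_trans hks1 hk, hk'.le⟩) (ih hk'.le) hk'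
  -- positivity of the tail product
  have hP : ∀ k, kstar ≤ k + 1 → 0 < ∏ i ∈ Icc (k+1) n, (1 - p i) := by
    intro k hk
    apply Finset.prod_pos
    intro i hi
    obtain ⟨hi1, hi2⟩ := mem_Icc.mp hi
    have := hp' i (le_trans hk hi1) hi2
    linarith
  -- closed form for EK
  have hB : ∀ k, kstar ≤ k + 1 → k ≤ n →
      EK k = (∏ i ∈ Icc (k+1) n, (1 - p i)) * ∑ j ∈ Icc (k+1) n, w j * p j / (1 - p j) := by
    suffices H : ∀ m k, k + m = n → kstar ≤ k + 1 →
        EK k = (∏ i ∈ Icc (k+1) n, (1 - p i)) * ∑ j ∈ Icc (k+1) n, w j * p j / (1 - p j) by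
      intro k h1 h2; exact H (n - k) k (by omega) h1
    intro m
    induction m with
    | zero =>
      intro k hk _
      have hkn : k = n := by omega
      subst hkn
      rw [hEKn, Icc_eq_empty (by omega)]
      simp
    | succ m ih =>
      intro k hk hks
      have hkn : k < n := by omega
      have hk1 : kstar ≤ k + 1 := hks
      have hpk : p (k+1) < 1 := hp' (k+1) hk1 (by omega)
      have hmax : max (ES (k+1)) (EK (k+1)) = ES (k+1) :=
        max_eq_left (le_of_lt (hC (k+1) hk1 (by omega)))
      rw [hEK k hkn, hmax, ih (k+1) (by omega) (by omega), hES (k+1)]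
      have hins : Icc (k+1) n = insert (k+1) (Icc (k+2) n) := by
        ext x; simp only [mem_Icc, mem_insert]; omega
      have hnotmem : (k+1) ∉ Icc (k+2) n := by simp
      rw [hins, Finset.prod_insert hnotmem, Finset.sum_insert hnotmem]
      have hne : (1 : ℝ) - p (k+1) ≠ 0 := by linarith
      field_simp
  -- closed form for ES, for convenience
  have hESf : ∀ k, ES k = w k * ∏ i ∈ Icc (k+1) n, (1 - p i) := hES
  constructor
  · -- membership
    refine ⟨hks_mem, ?_⟩
    rcases Nat.eq_or_lt_of_le hks1 with h1 | h2
    · -- kstar = 1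
      rw [show kstar - 1 = 0 by omega, hw0]
      apply Finset.sum_nonneg
      intro j hj
      obtain ⟨hj1, hj2⟩ := mem_Icc.mp hj
      have hwj := hw j (mem_Icc.mpr ⟨by omega, hj2⟩)
      have hpj := hp j (mem_Icc.mpr ⟨by omega, hj2⟩)
      have hpj' := hp' j (by omega) hj2
      have : (0:ℝ) < 1 - p j := by linarith
      exact div_nonneg (mul_nonneg hwj.le hpj.1) this.le
    · -- kstar ≥ 2
      have hkm : kstar - 1 ∈ Icc 1 n := mem_Icc.mpr ⟨by omega, by omega⟩
      have hnot : ¬ ES (kstar - 1) > EK (kstar - 1) := by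
        intro hgt
        have := hlb ⟨hkm, hgt⟩
        omega
      push_neg at hnot
      have heq : kstar - 1 + 1 = kstar := by omega
      have hEKval := hB (kstar - 1) (by omega) (by omega)
      rw [heq] at hEKval
      have hESval := hESf (kstar - 1)
      rw [heq] at hESval
      have hPpos : 0 < ∏ i ∈ Icc kstar n, (1 - p i) := by
        have := hP (kstar - 1) (by omega)
        rwa [heq] at this
      rw [hESval, hEKval] at hnot
      nlinarith [hnot, hPpos]
  · -- upper bound
    intro k hk
    obtain ⟨hkmem, hksum⟩ := hk
    obtain ⟨hk1, hkn⟩ := mem_Icc.mp hkmem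
    by_contra hcon
    push_neg at hcon
    have hkge : kstar ≤ k - 1 := by omega
    have heq : k - 1 + 1 = k := by omega
    have hgt := hC (k-1) hkge (by omega)
    have hEKval := hB (k-1) (by omega) (by omega)
    rw [heq] at hEKval
    have hESval := hESf (k-1)
    rw [heq] at hESval
    have hPpos : 0 < ∏ i ∈ Icc k n, (1 - p i) := by
      have := hP (k-1) (by omega)
      rwa [heq] at this
    rw [hESval, hEKval] at hgt
    nlinarith [hgt, hPpos, hksum]
end

section
/- (Extended Odds-Theorem, value) Under the assumptions of monotonicity with optimal threshold s and p_i < 1 for all s ≤ i ≤ n, the optimal expected profit E_Keep(s-1) equals (∏_{j=s}^{n}(1 - p_j)) · ∑_{i=s}^{n} w_i · p_i / (1 - p_i). -/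
open Finset

theorem stmt9 (n : ℕ) (hn : 1 ≤ n) (p w : ℕ → ℝ)
    (hp : ∀ i ∈ Icc 1 n, 0 ≤ p i ∧ p i ≤ 1)
    (hw : ∀ i ∈ Icc 1 n, 0 < w i)
    (ES EK : ℕ → ℝ)
    (hES : ∀ k, ES k = w k * ∏ i ∈ Icc (k+1) n, (1 - p i))
    (hEKn : EK n = 0)
    (hEK : ∀ k < n, EK k = p (k+1) * max (ES (k+1)) (EK (k+1))
        + (1 - p (k+1)) * EK (k+1))
    (s : ℕ)
    (hleast : IsLeast {k | k ∈ Icc 1 n ∧ ES k > EK k} s)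
    (hup : ∀ k ∈ Icc 1 n, ES k > EK k → k < n → ES (k+1) > EK (k+1))
    (hp' : ∀ i, s ≤ i → i ≤ n → p i < 1) :
    EK (s-1) = (∏ j ∈ Icc s n, (1 - p j)) * ∑ i ∈ Icc s n, w i * p i / (1 - p i) := by
  obtain ⟨⟨hsmem, hsES⟩, hlb⟩ := hleast
  rw [mem_Icc] at hsmem
  obtain ⟨hs1, hsn⟩ := hsmem
  have hA : ∀ i, s ≤ i → i ≤ n → ES i > EK i := by
    intro i hsi
    induction i, hsi using Nat.le_induction with
    | base => intro _; exact hsES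
    | succ i hi ih =>
      intro hin
      have hin' : i ≤ n := le_trans (Nat.le_succ i) hin
      exact hup i (mem_Icc.mpr ⟨le_trans hs1 hi, hin'⟩) (ih hin') (Nat.lt_of_succ_le hin)
  have hB : ∀ m k, s - 1 ≤ k → k ≤ n → n - k = m →
      EK k = ∑ i ∈ Icc (k+1) n, (∏ j ∈ Icc (k+1) (i-1), (1 - p j)) * (p i * ES i) := by
    intro m
    induction m with
    | zero =>
      intro k hk1 hk2 hm
      have hk : k = n := by omega
      subst hk
      simp [hEKn, Icc_eq_empty_of_lt (Nat.lt_succ_self _)]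
    | succ m ih =>
      intro k hk1 hk2 hm
      have hkn : k < n := by omega
      have hEK1 := ih (k+1) (by omega) (by omega) (by omega)
      have hmax : max (ES (k+1)) (EK (k+1)) = ES (k+1) :=
        max_eq_left (le_of_lt (hA (k+1) (by omega) (by omega)))
      rw [hEK k hkn, hmax, hEK1]
      have hsplit : Icc (k+1) n = insert (k+1) (Icc (k+2) n) := by
        ext x; simp only [mem_Icc, mem_insert]; omega
      have hnotmem : (k+1) ∉ Icc (k+2) n := by simp [mem_Icc]
      rw [hsplit, Finset.sum_insert hnotmem]
      have hterm : (∏ j ∈ Icc (k+1) (k+1-1), (1 - p j)) = 1 := by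
        rw [Icc_eq_empty (by omega), Finset.prod_empty]
      rw [hterm, one_mul]
      congr 1
      rw [Finset.mul_sum]
      apply Finset.sum_congr rfl
      intro i hi
      rw [mem_Icc] at hi
      have hsplit2 : Icc (k+1) (i-1) = insert (k+1) (Icc (k+2) (i-1)) := by
        ext x; simp only [mem_Icc, mem_insert]; omega
      have hnm2 : (k+1) ∉ Icc (k+2) (i-1) := by simp [mem_Icc]
      rw [hsplit2, Finset.prod_insert hnm2]
      ring
  have hEKs := hB (n - (s-1)) (s-1) le_rfl (by omega) rfl
  have hs' : s - 1 + 1 = s := by omega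
  rw [hEKs]
  simp only [hs']
  rw [Finset.mul_sum]
  apply Finset.sum_congr rfl
  intro i hi
  rw [mem_Icc] at hi
  have hpi : p i < 1 := hp' i hi.1 hi.2
  have hne : (1 : ℝ) - p i ≠ 0 := ne_of_gt (by linarith)
  have hi1 : 1 ≤ i := le_trans hs1 hi.1
  rw [hES i]
  have hprod : ∏ j ∈ Icc s n, (1 - p j)
      = (∏ j ∈ Icc s (i-1), (1 - p j)) * (1 - p i) * ∏ j ∈ Icc (i+1) n, (1 - p j) := by
    rw [← Finset.Ico_add_one_right_eq_Icc,
      ← Finset.prod_Ico_consecutive _ (show s ≤ i+1 by omega) (show i+1 ≤ n+1 by omega),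
      Finset.Ico_add_one_right_eq_Icc]
    congr 1
    have hins : Icc s i = insert i (Icc s (i-1)) := by
      ext x; simp only [mem_Icc, mem_insert]; omega
    have hnm : i ∉ Icc s (i-1) := by simp [mem_Icc]; omega
    rw [hins, Finset.prod_insert hnm]
    ring
  rw [hprod]
  field_simp
end

section
/- If the problem is monotone with optimal threshold k*, then E_Keep(r) = Ē_Keep(r) for all r ≥ k* - 1, and E_Keep(r) = Ē_Keep(k* - 1) for all r < k* - 1. -/
open Finset

theorem stmt10 (n : ℕ) (hn : 1 ≤ n) (p w : ℕ → ℝ)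
    (hp : ∀ i ∈ Icc 1 n, 0 ≤ p i ∧ p i ≤ 1)
    (hw : ∀ i ∈ Icc 1 n, 0 < w i)
    (ES EK EB : ℕ → ℝ)
    (hES : ∀ k, ES k = w k * ∏ i ∈ Icc (k+1) n, (1 - p i))
    (hEKn : EK n = 0)
    (hEK : ∀ k < n, EK k = p (k+1) * max (ES (k+1)) (EK (k+1))
        + (1 - p (k+1)) * EK (k+1))
    (hEB : ∀ k, EB k = ∑ i ∈ Icc (k+1) n,
        (∏ j ∈ Icc (k+1) (i-1), (1 - p j)) * p i * ES i)
    (kstar : ℕ)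
    (hleast : IsLeast {k | k ∈ Icc 1 n ∧ ES k > EK k} kstar)
    (hup : ∀ k ∈ Icc 1 n, ES k > EK k → k < n → ES (k+1) > EK (k+1)) :
    (∀ r, kstar - 1 ≤ r → r ≤ n → EK r = EB r) ∧
    (∀ r, r < kstar - 1 → EK r = EB (kstar - 1)) := by
  obtain ⟨⟨hks_mem, hks_gt⟩, hks_min⟩ := hleast
  rw [mem_Icc] at hks_mem
  obtain ⟨hks1, hksn⟩ := hks_mem
  -- EB at n is 0
  have hEBn : EB n = 0 := by
    rw [hEB n]
    rw [Icc_eq_empty (by omega)]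
    simp
  -- recursion for EB
  have hEBrec : ∀ k < n, EB k = p (k+1) * ES (k+1) + (1 - p (k+1)) * EB (k+1) := by
    intro k hk
    rw [hEB k, hEB (k+1)]
    rw [Icc_eq_cons_Ioc (by omega : k + 1 ≤ n), sum_cons]
    have h1 : Icc (k+1) (k+1-1) = (∅ : Finset ℕ) := Icc_eq_empty (by omega)
    rw [h1, prod_empty, one_mul]
    congr 1
    have h2 : Ioc (k+1) n = Icc (k+1+1) n := by
      rw [← Finset.Icc_add_one_left_eq_Ioc]
    rw [h2, mul_sum]
    apply sum_congr rfl
    intro i hi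
    rw [mem_Icc] at hi
    have h3 : Icc (k+1) (i-1) = (Ioc (k+1) (i-1)).cons (k+1) (by simp) :=
      Icc_eq_cons_Ioc (by omega)
    rw [h3, prod_cons, ← Finset.Icc_add_one_left_eq_Ioc]
    ring
  -- for k in [kstar, n], ES k > EK k
  have hgt : ∀ k, kstar ≤ k → k ≤ n → ES k > EK k := by
    intro k hk
    induction k with
    | zero => omega
    | succ m ih =>
      intro hmn
      rcases Nat.eq_or_lt_of_le hk with h | h
      · rw [← h]; exact hks_gt
      · have hm : kstar ≤ m := by omega
        exact hup m (by rw [mem_Icc]; omega) (ih hm (by omega)) (by omega)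
  -- first part
  have part1 : ∀ r, kstar - 1 ≤ r → r ≤ n → EK r = EB r := by
    have key : ∀ d, ∀ r, n - r ≤ d → kstar - 1 ≤ r → r ≤ n → EK r = EB r := by
      intro d
      induction d with
      | zero =>
        intro r h1 h2 h3
        have : r = n := by omega
        rw [this, hEKn, hEBn]
      | succ m ih =>
        intro r h1 h2 h3
        rcases Nat.eq_or_lt_of_le h3 with h | h
        · rw [h, hEKn, hEBn]
        · have hmax : max (ES (r+1)) (EK (r+1)) = ES (r+1) :=
            max_eq_left (le_of_lt (hgt (r+1) (by omega) (by omega)))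
        -- caution: need r+1 ≥ kstar: r ≥ kstar - 1 so r+1 ≥ kstar (kstar ≥ 1)
          rw [hEK r h, hmax, hEBrec r h, ih (r+1) (by omega) (by omega) (by omega)]
    intro r h1 h2
    exact key (n - r) r le_rfl h1 h2
  refine ⟨part1, ?_⟩
  -- EK constant below kstar - 1
  have hconst : ∀ d, ∀ r, r + d = kstar - 1 → EK r = EK (kstar - 1) := by
    intro d
    induction d with
    | zero => intro r h; rw [show r = kstar - 1 by omega]
    | succ m ih =>
      intro r h
      have hrn : r < n := by omega
      have hle : ES (r+1) ≤ EK (r+1) := by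
        by_contra hcon
        push_neg at hcon
        have := hks_min ⟨by rw [mem_Icc]; omega, hcon⟩
        omega
      have hmax : max (ES (r+1)) (EK (r+1)) = EK (r+1) := max_eq_right hle
      have : EK r = EK (r+1) := by
        rw [hEK r hrn, hmax]; ring
      rw [this, ih (r+1) (by omega)]
  intro r hr
  rw [hconst (kstar - 1 - r) r (by omega)]
  exact part1 (kstar - 1) le_rfl (by omega)
end

section
/- (Odds-Theorem value as a special case) Take w_i = 1 for all i and suppose p_i < 1 for all i. With s = max{ k ∈ {1,...,n} : ∑_{j=k}^{n} p_j/(1-p_j) ≥ 1 } if ∑_{j=1}^{n} p_j/(1-p_j) ≥ 1 and s = 1 otherwise, the value of the strategy 'stop on the first success at index ≥ s' equals (∏_{j=s}^{n}(1-p_j)) · ∑_{i=s}^{n} p_i/(1-p_i), and this value equals Ē_Keep(s-1) = ∑_{i=s}^{n} (∏_{j=s}^{i-1}(1-p_j)) · p_i · ∏_{t=i+1}^{n}(1-p_t). -/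
open Finset

theorem stmt11 (n : ℕ) (hn : 1 ≤ n) (p : ℕ → ℝ)
    (hp : ∀ i ∈ Icc 1 n, 0 ≤ p i ∧ p i < 1)
    (EB : ℕ → ℝ)
    (hEB : ∀ k, EB k = ∑ i ∈ Icc (k+1) n,
        (∏ j ∈ Icc (k+1) (i-1), (1 - p j)) * p i * ∏ t ∈ Icc (i+1) n, (1 - p t))
    (s : ℕ)
    (hs : if 1 ≤ ∑ j ∈ Icc 1 n, p j / (1 - p j) then
        IsGreatest {k | k ∈ Icc 1 n ∧ 1 ≤ ∑ j ∈ Icc k n, p j / (1 - p j)} s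
      else s = 1) :
    EB (s-1) = (∏ j ∈ Icc s n, (1 - p j)) * ∑ i ∈ Icc s n, p i / (1 - p i) := by
  have hs1 : 1 ≤ s := by
    split_ifs at hs with h
    · exact (mem_Icc.mp hs.1.1).1
    · omega
  rw [hEB, Nat.sub_add_cancel hs1, Finset.mul_sum]
  apply Finset.sum_congr rfl
  intro i hi
  obtain ⟨hsi, hin⟩ := mem_Icc.mp hi
  have hi1 : 1 ≤ i := le_trans hs1 hsi
  have hpi := hp i (mem_Icc.mpr ⟨hi1, hin⟩)
  have hne : (1 - p i) ≠ 0 := by linarith [hpi.2]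
  have hsplit : (∏ j ∈ Icc s n, (1 - p j))
      = (∏ j ∈ Icc s (i-1), (1 - p j)) * (1 - p i) * ∏ t ∈ Icc (i+1) n, (1 - p t) := by
    have e1 : Icc s (i-1) = Ico s i := by rw [← Finset.Ico_add_one_right_eq_Icc]; congr 1; omega
    have e2 : Icc (i+1) n = Ico (i+1) (n+1) := (Finset.Ico_add_one_right_eq_Icc _ _).symm
    rw [← Finset.Ico_add_one_right_eq_Icc, e1, e2,
      ← Finset.prod_Ico_consecutive _ hsi (by omega : i ≤ n+1),
      ← Finset.prod_Ico_consecutive _ (by omega : i ≤ i+1) (by omega : i+1 ≤ n+1),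
      Nat.Ico_succ_singleton, Finset.prod_singleton, ← mul_assoc]
  rw [hsplit]
  field_simp
end

section
/- (Best-choice Minimal Duration asymptotics) Let s_n := max{ k ∈ {2,...,n} : ∑_{i=k-2}^{n-1} 1/i ≥ 2k - n - 2 } (with the convention that indices below 1 are omitted from the sum). Then s_n / n → 1/2 as n → ∞. -/
open Finset Filter

theorem stmt13 (s : ℕ → ℕ)
    (hs : ∀ n, 2 ≤ n → IsGreatest {k : ℕ | 2 ≤ k ∧ k ≤ n ∧
        (2 * (k : ℝ) - n - 2) ≤ ∑ i ∈ Icc (max (k-2) 1) (n-1), (1 : ℝ) / i} (s n)) :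
    Tendsto (fun n : ℕ => (s n : ℝ) / n) atTop (nhds (1/2)) := by
  -- lower bound: s n ≥ (n+2)/2 (nat division)
  have hlow : ∀ n : ℕ, 2 ≤ n → (n : ℝ) / 2 ≤ (s n : ℝ) := by
    intro n hn
    have hmem : (n + 2) / 2 ∈ {k : ℕ | 2 ≤ k ∧ k ≤ n ∧
        (2 * (k : ℝ) - n - 2) ≤ ∑ i ∈ Icc (max (k-2) 1) (n-1), (1 : ℝ) / i} := by
      refine ⟨by omega, by omega, ?_⟩
      have h1 : 2 * (((n + 2) / 2 : ℕ) : ℝ) - n - 2 ≤ 0 := by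
        have : 2 * ((n + 2) / 2) ≤ n + 2 := by omega
        have := (Nat.cast_le (α := ℝ)).2 this
        push_cast at this ⊢
        linarith
      refine h1.trans (Finset.sum_nonneg fun i _ => ?_)
      positivity
    have hle := (hs n hn).2 hmem
    have : (n : ℝ) + 1 ≤ 2 * ((n + 2) / 2 : ℕ) := by
      have : n + 1 ≤ 2 * ((n + 2) / 2) := by omega
      exact_mod_cast this
    have hc : (((n + 2) / 2 : ℕ) : ℝ) ≤ (s n : ℝ) := Nat.cast_le.2 hle
    linarith
  -- upper bound
  have hup : ∀ n : ℕ, 2 ≤ n → (s n : ℝ) ≤ (n + 3 + Real.log n) / 2 := by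
    intro n hn
    obtain ⟨h2, hkn, hsum⟩ := (hs n hn).1
    have hsub : Icc (max (s n - 2) 1) (n-1) ⊆ Icc 1 (n-1) := by
      apply Finset.Icc_subset_Icc_left
      exact le_max_right _ _
    have h1 : ∑ i ∈ Icc (max (s n - 2) 1) (n-1), (1 : ℝ) / i
        ≤ ∑ i ∈ Icc 1 (n-1), (1 : ℝ) / i :=
      Finset.sum_le_sum_of_subset_of_nonneg hsub (fun i _ _ => by positivity)
    have h2' : ∑ i ∈ Icc 1 (n-1), (1 : ℝ) / i = (harmonic (n-1) : ℝ) := by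
      rw [harmonic_eq_sum_Icc]
      push_cast
      simp [one_div]
    have h3 : (harmonic (n-1) : ℝ) ≤ 1 + Real.log ((n-1 : ℕ) : ℝ) := harmonic_le_one_add_log _
    have h4 : Real.log ((n - 1 : ℕ) : ℝ) ≤ Real.log n := by
      apply Real.log_le_log
      · have : 1 ≤ n - 1 := by omega
        exact_mod_cast Nat.lt_of_lt_of_le Nat.zero_lt_one this
      · exact_mod_cast Nat.sub_le n 1
    have : 2 * (s n : ℝ) - n - 2 ≤ 1 + Real.log n := by
      calc 2 * (s n : ℝ) - n - 2 ≤ _ := hsum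
        _ ≤ (harmonic (n-1) : ℝ) := by rw [← h2']; exact h1
        _ ≤ 1 + Real.log ((n-1 : ℕ) : ℝ) := h3
        _ ≤ 1 + Real.log n := by linarith
    linarith
  -- squeeze
  have hub : Tendsto (fun n : ℕ => 1/2 + (3 / (n:ℝ)) / 2 + (Real.log n / n) / 2) atTop
      (nhds (1/2)) := by
    have hlog : Tendsto (fun n : ℕ => Real.log n / n) atTop (nhds 0) :=
      (Real.isLittleO_log_id_atTop.tendsto_div_nhds_zero).comp tendsto_natCast_atTop_atTop
    have h3n : Tendsto (fun n : ℕ => 3 / (n : ℝ)) atTop (nhds 0) :=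
      tendsto_const_nhds.div_atTop tendsto_natCast_atTop_atTop
    have h := ((tendsto_const_nhds (x := (1/2 : ℝ)) (f := atTop (α := ℕ))).add
        (h3n.div_const 2)).add (hlog.div_const 2)
    simpa using h
  refine tendsto_of_tendsto_of_tendsto_of_le_of_le' tendsto_const_nhds hub ?_ ?_
  · filter_upwards [eventually_ge_atTop 2] with n hn
    have hn0 : (0:ℝ) < n := by exact_mod_cast Nat.lt_of_lt_of_le (by norm_num) hn
    rw [le_div_iff₀ hn0]
    have := hlow n hn
    linarith
  · filter_upwards [eventually_ge_atTop 2] with n hn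
    have hn0 : (0:ℝ) < n := by exact_mod_cast Nat.lt_of_lt_of_le (by norm_num) hn
    have hn' : (n:ℝ) ≠ 0 := hn0.ne'
    rw [div_le_iff₀ hn0]
    have heq : (1/2 + (3 / (n:ℝ)) / 2 + (Real.log n / n) / 2) * n
        = ((n:ℝ) + 3 + Real.log n) / 2 := by
      field_simp
    rw [heq]
    exact hup n hn
end
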